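/- Let p be a prime and n an integer such that p - 1 divides n - 2. Define f, g : Z_p → Z_p by f(x) = x and g(x) = -x. Then f and g are additive and satisfy x^{-n} f(x) + g(x^{-1}) = 0 for every nonzero x in Z_p, yet f(1) ≠ 0. -/
import Mathlib


theorem stmt_10 (p : ℕ) [Fact p.Prime] (n : ℤ) (hdvd : ((p : ℤ) - 1) ∣ (n - 2)) :
    let f : ZMod p → ZMod p := fun x => x
    let g : ZMod p → ZMod p := fun x => -x
    (∀ x y, f (x + y) = f x + f y) ∧ (∀ x y, g (x + y) = g x + g y) ∧
    (∀ x : ZMod p, x ≠ 0 → x ^ (-n) * f x + g x⁻¹ = 0) ∧ f 1 ≠ 0 := by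
  intro f g
  obtain ⟨k, hk⟩ := hdvd
  refine ⟨fun x y => rfl, fun x y => neg_add _ _, fun x hx => ?_, one_ne_zero⟩
  have hp1 : x ^ ((p : ℤ) - 1) = 1 := by
    have h1 : (1 : ℕ) ≤ p := (Fact.out : p.Prime).one_lt.le
    have : ((p : ℤ) - 1) = ((p - 1 : ℕ) : ℤ) := by push_cast [h1]; ring
    rw [this, zpow_natCast, ZMod.pow_card_sub_one_eq_one hx]
  have key : x ^ (-n) * x = x⁻¹ := by
    have : x ^ (-n) * x = x ^ (-n + 1) := by
      rw [zpow_add₀ hx, zpow_one]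
    rw [this]
    have hexp : -n + 1 = -1 + ((p : ℤ) - 1) * (-k) := by linarith [hk]
    rw [hexp, zpow_add₀ hx, zpow_mul, hp1, one_zpow, mul_one, zpow_neg_one]
  simp only [f, g, key, add_neg_cancel]
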